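/- For every γ > 0 and every lower semicontinuous function f : V → [0,∞], the quadratic envelope of f equals the twice-iterated S-transform of f; that is, for all x ∈ V, Q_γ(f)(x) = S_γ(S_γ(f))(x), equivalently Q_γ(f)(x) = sup_{y∈V} [ (inf_{w∈V} ( f(w) + (γ/2)‖w−y‖² )) − (γ/2)‖x−y‖² ]. -/
import Mathlib


variable {V : Type*} [NormedAddCommGroup V] [InnerProductSpace ℝ V] [CompleteSpace V]
  [TopologicalSpace.SeparableSpace V]

/-- The quadratic envelope `Q_γ(f)`:
`Q_γ(f)(x) = sup { α − (γ/2)‖x−y‖² : α ∈ ℝ, y ∈ V, α − (γ/2)‖·−y‖² ≤ f }`. -/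
noncomputable def Qenv (γ : ℝ) (f : V → EReal) (x : V) : EReal :=
  sSup {v : EReal | ∃ α : ℝ, ∃ y : V,
    (∀ z : V, ((α - γ / 2 * ‖z - y‖ ^ 2 : ℝ) : EReal) ≤ f z) ∧
      v = ((α - γ / 2 * ‖x - y‖ ^ 2 : ℝ) : EReal)}

/-- The transform `S_γ(f)(y) = sup_x ( −f(x) − (γ/2)‖x−y‖² )`. -/
noncomputable def Senv (γ : ℝ) (f : V → EReal) (y : V) : EReal :=
  ⨆ x : V, (-(f x) - ((γ / 2 * ‖x - y‖ ^ 2 : ℝ) : EReal))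

/-- Convexity for extended-real-valued functions. -/
def ERealConvex (g : V → EReal) : Prop :=
  ∀ x y : V, ∀ a b : ℝ, 0 ≤ a → 0 ≤ b → a + b = 1 →
    g (a • x + b • y) ≤ (a : EReal) * g x + (b : EReal) * g y

/-- The lower semicontinuous convex envelope: the (pointwise) greatest lower semicontinuous
convex minorant of `g`. -/
noncomputable def convEnv (g : V → EReal) (x : V) : EReal :=
  ⨆ h : {h : V → EReal // LowerSemicontinuous h ∧ ERealConvex h ∧ ∀ z, h z ≤ g z}, h.1 x

/-- Lower semicontinuity with respect to the weak topology of `V`. -/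
def WeaklyLSC (g : V → EReal) : Prop :=
  LowerSemicontinuous (fun x : WeakSpace ℝ V => g x)

/-- `h` is coercive iff all its sublevel sets are bounded. -/
def Coercive (h : V → EReal) : Prop :=
  ∀ c : ℝ, Bornology.IsBounded {x : V | h x ≤ (c : EReal)}

private lemma ereal_iSup_neg {ι : Sort*} (g : ι → EReal) : (⨆ i, -g i) = -⨅ i, g i := by
  apply le_antisymm
  · exact iSup_le fun i => EReal.neg_le_neg_iff.2 (iInf_le g i)
  · rw [EReal.neg_le]
    exact le_iInf fun i => EReal.neg_le_of_neg_le (le_iSup (fun i => -g i) i)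

private lemma ereal_top_le_of_forall_real {a : EReal} (h : ∀ r : ℝ, (r : EReal) ≤ a) :
    a = ⊤ := by
  induction a with
  | bot => simpa using h 0
  | coe b => exact absurd (by exact_mod_cast h (b + 1)) (by linarith)
  | top => rfl

theorem stmt_0 (γ : ℝ) (hγ : 0 < γ) (f : V → EReal) (hf0 : ∀ x, 0 ≤ f x)
    (hlsc : LowerSemicontinuous f) (x : V) :
    Qenv γ f x = Senv γ (Senv γ f) x ∧
    Qenv γ f x =
      ⨆ y : V, ((⨅ w : V, (f w + ((γ / 2 * ‖w - y‖ ^ 2 : ℝ) : EReal)))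
        - ((γ / 2 * ‖x - y‖ ^ 2 : ℝ) : EReal)) := by
  have key : ∀ y : V, -(Senv γ f y) = ⨅ w : V, (f w + ((γ / 2 * ‖w - y‖ ^ 2 : ℝ) : EReal)) := by
    intro y
    have h1 : Senv γ f y = ⨆ w : V, -(f w + ((γ / 2 * ‖w - y‖ ^ 2 : ℝ) : EReal)) := by
      unfold Senv
      congr 1; funext w
      rw [EReal.neg_add (Or.inr (EReal.coe_ne_top _)) (Or.inr (EReal.coe_ne_bot _))]
    rw [h1, ereal_iSup_neg, neg_neg]
  have main : Qenv γ f x =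
      ⨆ y : V, ((⨅ w : V, (f w + ((γ / 2 * ‖w - y‖ ^ 2 : ℝ) : EReal)))
        - ((γ / 2 * ‖x - y‖ ^ 2 : ℝ) : EReal)) := by
    apply le_antisymm
    · apply sSup_le
      rintro v ⟨α, y, hαy, rfl⟩
      refine le_trans ?_ (le_iSup _ y)
      rw [EReal.coe_sub]
      refine EReal.sub_le_sub (le_iInf fun w => ?_) le_rfl
      have h := hαy w
      rw [EReal.coe_sub] at h
      exact (EReal.sub_le_iff_le_add (Or.inl (EReal.coe_ne_bot _))
        (Or.inl (EReal.coe_ne_top _))).1 h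
    · apply iSup_le
      intro y
      set A : EReal := ⨅ w : V, (f w + ((γ / 2 * ‖w - y‖ ^ 2 : ℝ) : EReal)) with hA
      rcases eq_or_ne A ⊤ with hT | hT
      · rw [hT, EReal.top_sub_coe, top_le_iff]
        apply ereal_top_le_of_forall_real
        intro r
        have hfw : ∀ w : V, f w = ⊤ := by
          intro w
          have := iInf_eq_top.1 hT w
          by_contra hne
          have hb : f w ≠ ⊥ :=
            ne_of_gt (lt_of_lt_of_le (EReal.coe_zero ▸ EReal.bot_lt_coe 0) (hf0 w))
          rw [← EReal.coe_toReal hne hb, ← EReal.coe_add] at this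
          exact EReal.coe_ne_top _ this
        have : ((r + γ / 2 * ‖x - y‖ ^ 2 - γ / 2 * ‖x - y‖ ^ 2 : ℝ) : EReal) ≤ Qenv γ f x := by
          apply le_sSup
          exact ⟨r + γ / 2 * ‖x - y‖ ^ 2, y, fun z => by rw [hfw z]; exact le_top, rfl⟩
        simpa using this
      · have hB : A ≠ ⊥ := by
          have h0 : (0 : EReal) ≤ A := le_iInf fun w =>
            le_trans (hf0 w) (le_add_of_nonneg_right (EReal.coe_nonneg.2 (by positivity)))
          exact ne_of_gt (lt_of_lt_of_le (EReal.coe_zero ▸ EReal.bot_lt_coe 0) h0)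
        obtain ⟨r, hr⟩ : ∃ r : ℝ, A = (r : EReal) := ⟨A.toReal, (EReal.coe_toReal hT hB).symm⟩
        rw [hr, ← EReal.coe_sub]
        apply le_sSup
        refine ⟨r, y, fun z => ?_, rfl⟩
        rw [EReal.coe_sub]
        refine (EReal.sub_le_iff_le_add (Or.inl (EReal.coe_ne_bot _))
          (Or.inl (EReal.coe_ne_top _))).2 ?_
        rw [← hr]
        exact iInf_le _ z
  refine ⟨?_, main⟩
  rw [main,
    show Senv γ (Senv γ f) x
      = ⨆ y : V, (-(Senv γ f y) - ((γ / 2 * ‖y - x‖ ^ 2 : ℝ) : EReal)) from rfl]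
  congr 1; funext y
  rw [key y, norm_sub_rev x y]
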